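/- Let Ũ be a d×d complex matrix (not necessarily unitary) with ‖Ũ†Ũ − I‖ ≤ ε for some ε ∈ [0,1]. Then the operator norm of (1/4)(3Ũ† − Ũ†ŨŨ†)(3Ũ − ŨŨ†Ũ) − I is at most (3/4)ε² + (1/4)ε³; in particular, the success probability of oblivious amplitude amplification (1/4)‖(3Ũ − ŨŨ†Ũ)|ψ⟩‖² is at least 1 − (3/4)ε² − (1/4)ε³ for any unit vector |ψ⟩. -/

import Mathlib

open Matrix
open scoped Matrix.Norms.L2Operator

/-- If `‖ŨᴴŨ − I‖ ≤ ε` with `ε ∈ [0,1]`, then the OAA operator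
`(1/4)(3Ũᴴ − ŨᴴŨŨᴴ)(3Ũ − ŨŨᴴŨ)` is within `(3/4)ε² + (1/4)ε³` of the identity in operator
norm; in particular the success probability `(1/4)‖(3Ũ − ŨŨᴴŨ)|ψ⟩‖²` is at least
`1 − (3/4)ε² − (1/4)ε³` for any unit vector `ψ`. -/
theorem oaa_success_probability (d : ℕ) (U : Matrix (Fin d) (Fin d) ℂ) (ε : ℝ)
    (hε : ε ∈ Set.Icc (0 : ℝ) 1) (h : ‖Uᴴ * U - 1‖ ≤ ε) :
    ‖(1 / 4 : ℂ) • (((3 : ℂ) • Uᴴ - Uᴴ * U * Uᴴ) * ((3 : ℂ) • U - U * Uᴴ * U)) - 1‖ ≤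
        3 / 4 * ε ^ 2 + 1 / 4 * ε ^ 3 ∧
      ∀ ψ : EuclideanSpace ℂ (Fin d), ‖ψ‖ = 1 →
        1 - (3 / 4 * ε ^ 2 + 1 / 4 * ε ^ 3) ≤
          1 / 4 * ‖Matrix.toEuclideanLin ((3 : ℂ) • U - U * Uᴴ * U) ψ‖ ^ 2 := by
  obtain ⟨hε0, hε1⟩ := hε
  set E : Matrix (Fin d) (Fin d) ℂ := Uᴴ * U - 1 with hE
  have key : (((3 : ℂ) • Uᴴ - Uᴴ * U * Uᴴ) * ((3 : ℂ) • U - U * Uᴴ * U))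
      = (4 : ℂ) • 1 + (E * E * E - (3 : ℂ) • (E * E)) := by
    rw [hE]
    generalize Uᴴ = V
    noncomm_ring
    module
  have key2 : (1 / 4 : ℂ) • (((3 : ℂ) • Uᴴ - Uᴴ * U * Uᴴ) * ((3 : ℂ) • U - U * Uᴴ * U)) - 1
      = (1 / 4 : ℂ) • (E * E * E - (3 : ℂ) • (E * E)) := by
    rw [key, smul_add, smul_smul]
    norm_num
  have hEn : (0:ℝ) ≤ ‖E‖ := norm_nonneg _
  have hnorm : ‖(1 / 4 : ℂ) • (((3 : ℂ) • Uᴴ - Uᴴ * U * Uᴴ) * ((3 : ℂ) • U - U * Uᴴ * U)) - 1‖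
      ≤ 3 / 4 * ε ^ 2 + 1 / 4 * ε ^ 3 := by
    rw [key2, norm_smul]
    have h1 : ‖E * E * E - (3 : ℂ) • (E * E)‖ ≤ ‖E‖^3 + 3 * ‖E‖^2 := by
      calc ‖E * E * E - (3 : ℂ) • (E * E)‖ ≤ ‖E * E * E‖ + ‖(3 : ℂ) • (E * E)‖ :=
            norm_sub_le _ _
        _ ≤ ‖E‖^3 + 3 * ‖E‖^2 := by
            rw [norm_smul]
            have h2 : ‖E * E * E‖ ≤ ‖E‖ * ‖E‖ * ‖E‖ :=
              le_trans (norm_mul_le _ _) (by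
                gcongr
                exact norm_mul_le _ _)
            have h3 : ‖E * E‖ ≤ ‖E‖ * ‖E‖ := norm_mul_le _ _
            simp only [Complex.norm_ofNat]
            nlinarith
    have h4 : ‖(1/4 : ℂ)‖ = 1/4 := by norm_num
    rw [h4]
    nlinarith [pow_le_pow_left₀ hEn h 3, pow_le_pow_left₀ hEn h 2]
  refine ⟨hnorm, fun ψ hψ => ?_⟩
  -- second part
  set f := Matrix.toEuclideanCLM (n := Fin d) (𝕜 := ℂ) with hf
  have happ : ∀ M : Matrix (Fin d) (Fin d) ℂ, ∀ x : EuclideanSpace ℂ (Fin d),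
      Matrix.toEuclideanLin M x = f M x := fun M x => by
    rw [hf, ← Matrix.coe_toEuclideanCLM_eq_toEuclideanLin]
    rfl
  set B : Matrix (Fin d) (Fin d) ℂ := (3 : ℂ) • U - U * Uᴴ * U with hB
  have hBH : Bᴴ = (3 : ℂ) • Uᴴ - Uᴴ * U * Uᴴ := by
    rw [hB]
    simp [conjTranspose_smul, conjTranspose_mul, Matrix.mul_assoc]
  set A : Matrix (Fin d) (Fin d) ℂ := (1 / 4 : ℂ) • (Bᴴ * B) - 1 with hA
  have hAnorm : ‖A‖ ≤ 3 / 4 * ε ^ 2 + 1 / 4 * ε ^ 3 := by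
    rw [hA, hBH, hB]; exact hnorm
  -- norm of apply
  have hApψ : ‖f A ψ‖ ≤ 3 / 4 * ε ^ 2 + 1 / 4 * ε ^ 3 := by
    calc ‖f A ψ‖ ≤ ‖f A‖ * ‖ψ‖ := (f A).le_opNorm ψ
      _ = ‖A‖ := by rw [hψ, mul_one, Matrix.cstar_norm_def]
      _ ≤ _ := hAnorm
  have hinner : (inner ℂ ψ (f A ψ) : ℂ)
      = (1/4 : ℂ) * (‖f B ψ‖ : ℂ)^2 - 1 := by
    have hfA : f A = (1/4 : ℂ) • (f Bᴴ * f B) - 1 := by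
      rw [hA, map_sub, _root_.map_smul, _root_.map_mul, _root_.map_one]
    rw [hfA]
    simp only [ContinuousLinearMap.sub_apply, ContinuousLinearMap.smul_apply,
      ContinuousLinearMap.one_apply, ContinuousLinearMap.mul_apply]
    rw [inner_sub_right, inner_smul_right]
    have hstar : f Bᴴ = ContinuousLinearMap.adjoint (f B) := by
      rw [← ContinuousLinearMap.star_eq_adjoint, ← map_star]
      rfl
    rw [hstar, ContinuousLinearMap.adjoint_inner_right]
    rw [inner_self_eq_norm_sq_to_K, inner_self_eq_norm_sq_to_K, hψ]
    push_cast
    ring_nf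
    rfl
  have habs : ‖(1/4 : ℂ) * (‖f B ψ‖ : ℂ)^2 - 1‖ ≤ 3 / 4 * ε ^ 2 + 1 / 4 * ε ^ 3 := by
    rw [← hinner]
    calc ‖(inner ℂ ψ (f A ψ) : ℂ)‖ ≤ ‖ψ‖ * ‖f A ψ‖ := norm_inner_le_norm _ _
      _ ≤ 3 / 4 * ε ^ 2 + 1 / 4 * ε ^ 3 := by rw [hψ, one_mul]; exact hApψ
  have hreal : (1/4 : ℂ) * (‖f B ψ‖ : ℂ)^2 - 1 = ((1/4 * ‖f B ψ‖^2 - 1 : ℝ) : ℂ) := by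
    push_cast; ring
  rw [hreal, Complex.norm_real] at habs
  have := abs_le.mp habs
  rw [happ]
  linarith [this.1]
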